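/- Let H be an abelian group containing an element g of infinite order, and let 𝒰 be a non-principal ultrafilter on ℕ. Then the ultrapower H^𝒰 contains a ℤ-linearly independent family of cardinality continuum; in particular the free abelian group of rank continuum ℤ^(ℝ) embeds into H^𝒰. -/

import Mathlib

/-- If `H` is an abelian group with an element of infinite order and `𝒰` is a non-principal
ultrafilter on `ℕ`, then the ultrapower `H^𝒰` contains a `ℤ`-linearly independent family of
cardinality continuum (indexed by `ℝ`); in particular `ℤ^(ℝ)` embeds into `H^𝒰`.  Elements
of the ultrapower are encoded by representing sequences; `ℤ`-linear independence of the
classes of `f r`, `r : ℝ`, means that for every finite set `s` of indices and integer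
coefficients `c` not all zero on `s`, the set of coordinates where `∏ r ∈ s, (f r n)^(c r)`
equals `1` is not in `𝒰`. -/
theorem stmt_15 (H : Type*) [CommGroup H] (g : H) (hg : ¬ IsOfFinOrder g)
    (𝒰 : Ultrafilter ℕ) (h𝒰 : ¬ ∃ n : ℕ, 𝒰 = pure n) :
    ∃ f : ℝ → ℕ → H, ∀ (s : Finset ℝ) (c : ℝ → ℤ), (∃ r ∈ s, c r ≠ 0) →
      {n : ℕ | (∏ r ∈ s, (f r n) ^ (c r)) = 1} ∉ 𝒰 := by
  -- a bijection from ℝ onto a ℚ-basis of ℝ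
  obtain ⟨e⟩ : Nonempty (ℝ ≃ (Module.Basis.ofVectorSpaceIndex ℚ ℝ)) := by
    rw [← Cardinal.eq, Cardinal.mk_real, ← Real.rank_rat_real]
    exact ((Module.Basis.ofVectorSpace ℚ ℝ).mk_eq_rank'').symm
  set x : ℝ → ℝ := fun r => (e r : ℝ) with hx
  have hli : LinearIndependent ℚ x := by
    have h := (Module.Basis.ofVectorSpace ℚ ℝ).linearIndependent
    rw [Module.Basis.coe_ofVectorSpace] at h
    exact h.comp e e.injective
  refine ⟨fun r n => g ^ ⌊x r * 2 ^ n⌋, ?_⟩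
  rintro s c ⟨r₀, hr₀, hc⟩ hmem
  -- the product is `g` to a single integer power
  have hzs : ∀ (t : Finset ℝ) (a : ℝ → ℤ), ∏ r ∈ t, g ^ a r = g ^ ∑ r ∈ t, a r := by
    intro t a
    induction t using Finset.induction with
    | empty => simp
    | insert _ _ h ih => rw [Finset.prod_insert h, Finset.sum_insert h, zpow_add, ih]
  have hprod : ∀ n : ℕ, (∏ r ∈ s, (g ^ ⌊x r * 2 ^ n⌋) ^ (c r))
      = g ^ (∑ r ∈ s, ⌊x r * 2 ^ n⌋ * c r) := by
    intro n
    rw [← hzs s (fun r => ⌊x r * 2 ^ n⌋ * c r)]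
    exact Finset.prod_congr rfl fun r _ => (zpow_mul g _ _).symm
  -- nonvanishing of the real linear combination
  set S : ℝ := ∑ r ∈ s, (c r : ℝ) * x r with hSdef
  have hS : S ≠ 0 := by
    intro h0
    have hsum : ∑ r ∈ s, (fun r => (c r : ℚ)) r • x r = 0 := by
      rw [← h0, hSdef]
      refine Finset.sum_congr rfl fun r _ => ?_
      rw [Rat.smul_def]
      push_cast
      ring
    have h4 : ((c r₀ : ℚ)) = 0 := linearIndependent_iff'.mp hli s (fun r => (c r : ℚ)) hsum r₀ hr₀
    exact hc (by exact_mod_cast h4)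
  set C : ℝ := ∑ r ∈ s, |(c r : ℝ)| with hCdef
  -- on the bad set, `n` is bounded
  have hsub : {n : ℕ | (∏ r ∈ s, (g ^ ⌊x r * 2 ^ n⌋) ^ (c r)) = 1}
      ⊆ Set.Iic ⌈C / |S|⌉₊ := by
    intro n hn
    simp only [Set.mem_setOf_eq, hprod n] at hn
    have hz : (∑ r ∈ s, ⌊x r * 2 ^ n⌋ * c r) = 0 := by
      by_contra h
      exact hg (isOfFinOrder_iff_zpow_eq_one.mpr ⟨_, h, hn⟩)
    -- estimate : |S| * 2^n ≤ C
    have hest : |S| * 2 ^ n ≤ C := by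
      have h1 : S * 2 ^ n - (∑ r ∈ s, ((⌊x r * 2 ^ n⌋ : ℝ) * c r))
          = ∑ r ∈ s, (c r : ℝ) * (x r * 2 ^ n - ⌊x r * 2 ^ n⌋) := by
        rw [hSdef, Finset.sum_mul, ← Finset.sum_sub_distrib]
        exact Finset.sum_congr rfl fun r _ => by ring
      have h2 : (∑ r ∈ s, ((⌊x r * 2 ^ n⌋ : ℝ) * c r)) = 0 := by
        exact_mod_cast congrArg (fun z : ℤ => (z : ℝ)) hz
      have h3 : |S * 2 ^ n| ≤ ∑ r ∈ s, |(c r : ℝ)| := by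
        calc |S * 2 ^ n| = |∑ r ∈ s, (c r : ℝ) * (x r * 2 ^ n - ⌊x r * 2 ^ n⌋)| := by
              rw [← h1, h2, sub_zero]
          _ ≤ ∑ r ∈ s, |(c r : ℝ) * (x r * 2 ^ n - ⌊x r * 2 ^ n⌋)| :=
              Finset.abs_sum_le_sum_abs _ _
          _ ≤ ∑ r ∈ s, |(c r : ℝ)| := by
              refine Finset.sum_le_sum fun r _ => ?_
              rw [abs_mul]
              have hfr : |x r * 2 ^ n - ⌊x r * 2 ^ n⌋| ≤ 1 := by
                rw [Int.self_sub_floor, abs_of_nonneg (Int.fract_nonneg _)]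
                exact (Int.fract_lt_one _).le
              calc |(c r : ℝ)| * |x r * 2 ^ n - ⌊x r * 2 ^ n⌋|
                  ≤ |(c r : ℝ)| * 1 := by
                    exact mul_le_mul_of_nonneg_left hfr (abs_nonneg _)
                _ = |(c r : ℝ)| := mul_one _
      calc |S| * 2 ^ n = |S * 2 ^ n| := by
            rw [abs_mul, abs_of_nonneg (by positivity : (0:ℝ) ≤ 2 ^ n)]
        _ ≤ C := h3
    have hn2 : (n : ℝ) < 2 ^ n := by exact_mod_cast (Nat.lt_two_pow_self (n := n))
    have hSpos : 0 < |S| := abs_pos.mpr hS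
    have : (n : ℝ) ≤ C / |S| := by
      rw [le_div_iff₀ hSpos, mul_comm]
      calc |S| * n ≤ |S| * 2 ^ n := by
            exact mul_le_mul_of_nonneg_left hn2.le hSpos.le
        _ ≤ C := hest
    have : (n : ℝ) ≤ (⌈C / |S|⌉₊ : ℝ) := this.trans (Nat.le_ceil _)
    exact_mod_cast this
  have hfin : {n : ℕ | (∏ r ∈ s, (g ^ ⌊x r * 2 ^ n⌋) ^ (c r)) = 1}.Finite :=
    (Set.finite_Iic _).subset hsub
  obtain ⟨a, _, ha⟩ := Ultrafilter.eq_pure_of_finite_mem hfin hmem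
  exact h𝒰 ⟨a, ha⟩
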